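/- With f(S) = 2S/(1+S), g(S) = 1.5 S/(0.8+S), D₀ = D = 1, D₁ = 0.5, a = 4, b = 1, S_in = 0.9, one has λ₁ = g⁻¹(D₁) = 0.4 < S_in = 0.9 < λ₀ = f⁻¹(D₀) = 1, and the system of equations μ(S,x) = d(x), D(S_in - S) = x d(x) — where μ(S,x) = (b f(S) + a x g(S))/(b + a x), d(x) = (b D₀ + a x D₁)/(b + a x) — admits at least two solutions with S ∈ (0, S_in) and x > 0. -/

import Mathlib

open Set

lemma keyroot (S : ℝ) (h1 : (0.5:ℝ) ≤ S) (h2 : S ≤ 0.85)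
    (hP : -675*S^4 - 10*S^3 + 737*S^2 - 52*S - 144 = 0) :
    ∃ x : ℝ, 0 < x ∧
      (2 * S / (1 + S) + 4 * x * (1.5 * S / (0.8 + S))) / (1 + 4 * x)
        = (1 + 4 * x * 0.5) / (1 + 4 * x) ∧
      (0.9 - S) = x * ((1 + 4 * x * 0.5) / (1 + 4 * x)) := by
  have hS1 : (0:ℝ) < 1 + S := by linarith
  have hS2 : (0:ℝ) < 0.8 + S := by linarith
  have hS3 : (0:ℝ) < S - 0.4 := by linarith
  have hS4 : (0:ℝ) < 1 - S := by linarith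
  set x : ℝ := (1 - S) * (0.8 + S) / (4 * (1 + S) * (S - 0.4)) with hx
  have hxpos : 0 < x := by positivity
  have hx4 : (0:ℝ) < 1 + 4 * x := by linarith
  have hkey : (0.9 - S) * (1 + 4 * x) = x * (1 + 2 * x) := by
    rw [hx]
    field_simp
    ring_nf
    linear_combination (2/125 : ℝ) * hP
  refine ⟨x, hxpos, ?_, ?_⟩
  · rw [div_eq_div_iff (by positivity) (by positivity), hx]
    field_simp
    ring
  · rw [eq_comm, mul_div_assoc', div_eq_iff hx4.ne']
    linear_combination -hkey

theorem stmt19 (f g : ℝ → ℝ) (D D₀ D₁ a b Sin : ℝ)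
    (hf : ∀ S, f S = 2 * S / (1 + S)) (hg : ∀ S, g S = 1.5 * S / (0.8 + S))
    (hD₀ : D₀ = 1) (hD : D = 1) (hD₁ : D₁ = 0.5) (ha : a = 4) (hb : b = 1)
    (hSin : Sin = 0.9)
    (μ : ℝ → ℝ → ℝ) (hμ : ∀ S x, μ S x = (b * f S + a * x * g S) / (b + a * x))
    (d : ℝ → ℝ) (hd : ∀ x, d x = (b * D₀ + a * x * D₁) / (b + a * x)) :
    -- λ₁ = g⁻¹(D₁) = 0.4 < Sin = 0.9 < λ₀ = f⁻¹(D₀) = 1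
    g 0.4 = D₁ ∧ f 1 = D₀ ∧ (0.4 : ℝ) < Sin ∧ Sin < 1 ∧
    -- there are at least two positive equilibria
    ∃ S₁ x₁ S₂ x₂ : ℝ,
      S₁ ∈ Ioo 0 Sin ∧ S₂ ∈ Ioo 0 Sin ∧ 0 < x₁ ∧ 0 < x₂ ∧
      μ S₁ x₁ = d x₁ ∧ D * (Sin - S₁) = x₁ * d x₁ ∧
      μ S₂ x₂ = d x₂ ∧ D * (Sin - S₂) = x₂ * d x₂ ∧
      (S₁, x₁) ≠ (S₂, x₂) := by
  refine ⟨by rw [hg, hD₁]; norm_num, by rw [hf, hD₀]; norm_num,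
    by rw [hSin]; norm_num, by rw [hSin]; norm_num, ?_⟩
  have hcont : Continuous fun S : ℝ => -675*S^4 - 10*S^3 + 737*S^2 - 52*S - 144 := by
    continuity
  obtain ⟨S₁, hS₁mem, hPS₁⟩ :=
    intermediate_value_Icc (by norm_num : (0.5:ℝ) ≤ 0.6) hcont.continuousOn
      (show (0:ℝ) ∈ Icc _ _ from ⟨by norm_num, by norm_num⟩)
  obtain ⟨S₂, hS₂mem, hPS₂⟩ :=
    intermediate_value_Icc' (by norm_num : (0.7:ℝ) ≤ 0.85) hcont.continuousOn
      (show (0:ℝ) ∈ Icc _ _ from ⟨by norm_num, by norm_num⟩)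
  obtain ⟨hS₁l, hS₁r⟩ := hS₁mem
  obtain ⟨hS₂l, hS₂r⟩ := hS₂mem
  obtain ⟨x₁, hx₁pos, he₁, he₁'⟩ := keyroot S₁ hS₁l (by linarith) hPS₁
  obtain ⟨x₂, hx₂pos, he₂, he₂'⟩ := keyroot S₂ (by linarith) hS₂r hPS₂
  refine ⟨S₁, x₁, S₂, x₂, ⟨by linarith, by rw [hSin]; linarith⟩,
    ⟨by linarith, by rw [hSin]; linarith⟩, hx₁pos, hx₂pos, ?_, ?_, ?_, ?_, ?_⟩
  · rw [hμ, hd, hb, ha, hD₀, hD₁, hf, hg]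
    linear_combination he₁
  · rw [hD, hSin, hd, hb, ha, hD₀, hD₁]
    linear_combination he₁'
  · rw [hμ, hd, hb, ha, hD₀, hD₁, hf, hg]
    linear_combination he₂
  · rw [hD, hSin, hd, hb, ha, hD₀, hD₁]
    linear_combination he₂'
  · simp only [ne_eq, Prod.mk.injEq, not_and]
    intro h
    linarith [h ▸ hS₁r]
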